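/- Twisted Kostant degrees of fundamental weights in type B: let n ≥ 2 and let w be a signed permutation of {1,…,n}. For 1 ≤ i ≤ n−1, with ω_i = ε₁ + ⋯ + ε_i: n^ν(ω_i, w) = 2·#{j ≤ i : w(j) > i or w(j) < 0}. For i = n, with ω_n = (ε₁ + ⋯ + ε_n)/2: n^ν(ω_n, w) = #{j ≤ n : w(j) < 0}. -/

import Mathlib

/-- The short positive roots of type `B_n` in `ℝ^n`: the vectors `ε_i`. -/
def typeBShortRoots (n : ℕ) : Set (Fin n → ℝ) :=
  {v | ∃ i : Fin n, v = Pi.single i 1}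

/-- The long positive roots of type `B_n` in `ℝ^n`: the vectors `ε_i - ε_j` and
`ε_i + ε_j` for `i < j`. -/
def typeBLongRoots (n : ℕ) : Set (Fin n → ℝ) :=
  {v | ∃ i j : Fin n, i < j ∧
    (v = Pi.single i 1 - Pi.single j 1 ∨ v = Pi.single i 1 + Pi.single j 1)}

/-- The set of twisted weights `ν_{β₁} + ⋯ + ν_{β_M}` of decompositions of `v` into
positive roots of `B_n` (with repetitions), where `ν_β = 1` for short `β` and
`ν_β = 2` for long `β`; a decomposition is encoded as a list of pairs `(β, ν_β)`. -/
def typeBTwistedWeights (n : ℕ) (v : Fin n → ℝ) : Set ℕ :=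
  {N | ∃ l : List ((Fin n → ℝ) × ℕ),
    (∀ p ∈ l, (p.1 ∈ typeBShortRoots n ∧ p.2 = 1) ∨ (p.1 ∈ typeBLongRoots n ∧ p.2 = 2)) ∧
    (l.map Prod.fst).sum = v ∧ (l.map Prod.snd).sum = N}


open Finset

private lemma short_abs_sum {n : ℕ} (a : Fin n) : ∑ j, |(Pi.single a 1 : Fin n → ℝ) j| = 1 := by
  have : ∀ j, |(Pi.single a 1 : Fin n → ℝ) j| = if j = a then 1 else 0 := by
    intro j; rw [Pi.single_apply]; split <;> simp
  simp [this]

private lemma absSum_le_aux {n : ℕ} (l : List ((Fin n → ℝ) × ℕ)) :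
    (∀ p ∈ l, (p.1 ∈ typeBShortRoots n ∧ p.2 = 1) ∨ (p.1 ∈ typeBLongRoots n ∧ p.2 = 2)) →
    ∑ j, |(l.map Prod.fst).sum j| ≤ (((l.map Prod.snd).sum : ℕ) : ℝ) := by
  induction l with
  | nil => intro _; simp
  | cons p l ih =>
    intro hl
    have hp := hl p List.mem_cons_self
    have key : ∑ j, |p.1 j| ≤ (p.2 : ℝ) := by
      rcases hp with ⟨⟨a, ha⟩, h2⟩ | ⟨⟨a, b, hab, hcase⟩, h2⟩
      · rw [ha, h2, short_abs_sum]; norm_num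
      · have hb : ∀ j, |p.1 j| ≤ |(Pi.single a 1 : Fin n → ℝ) j| + |(Pi.single b 1 : Fin n → ℝ) j| := by
          intro j
          rcases hcase with h | h <;> rw [h]
          · exact abs_sub _ _
          · exact abs_add_le _ _
        calc ∑ j, |p.1 j| ≤ ∑ j, (|(Pi.single a 1 : Fin n → ℝ) j| + |(Pi.single b 1 : Fin n → ℝ) j|) :=
              Finset.sum_le_sum fun j _ => hb j
          _ = 2 := by rw [Finset.sum_add_distrib, short_abs_sum, short_abs_sum]; norm_num
          _ ≤ (p.2 : ℝ) := by rw [h2]; norm_num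
    have ihl := ih (fun q hq => hl q (List.mem_cons_of_mem _ hq))
    simp only [List.map_cons, List.sum_cons, Pi.add_apply, Nat.cast_add]
    calc ∑ j, |p.1 j + (l.map Prod.fst).sum j|
        ≤ ∑ j, (|p.1 j| + |(l.map Prod.fst).sum j|) :=
          Finset.sum_le_sum fun j _ => abs_add_le _ _
      _ = (∑ j, |p.1 j|) + ∑ j, |(l.map Prod.fst).sum j| := Finset.sum_add_distrib
      _ ≤ (p.2 : ℝ) + ((l.map Prod.snd).sum : ℝ) := add_le_add key ihl

private lemma absSum_le {n : ℕ} {v : Fin n → ℝ} {N : ℕ}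
    (h : N ∈ typeBTwistedWeights n v) : ∑ j, |v j| ≤ (N : ℝ) := by
  obtain ⟨l, hl, hv, hN⟩ := h
  rw [← hv, ← hN]
  exact absSum_le_aux l hl

private lemma eval_sum_single_comp {n : ℕ} (t : Finset (Fin n)) (σ : Equiv.Perm (Fin n))
    (c : Fin n → ℝ) (j : Fin n) :
    (∑ k ∈ t, c k • (Pi.single (σ k) 1 : Fin n → ℝ)) j =
      if σ.symm j ∈ t then c (σ.symm j) else 0 := by
  rw [Finset.sum_apply]
  have h : ∀ k ∈ t, (c k • (Pi.single (σ k) 1 : Fin n → ℝ)) j =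
      if k = σ.symm j then c k else 0 := by
    intro k _
    rw [Pi.smul_apply, Pi.single_apply, smul_eq_mul]
    rcases eq_or_ne k (σ.symm j) with h | h
    · subst h; simp
    · rw [if_neg h, if_neg, mul_zero]
      intro hj; exact h (by rw [hj, Equiv.symm_apply_apply])
  rw [Finset.sum_congr rfl h, Finset.sum_ite_eq' t (σ.symm j) c]

private lemma eval_sum_single_id {n : ℕ} (t : Finset (Fin n)) (j : Fin n) :
    (∑ k ∈ t, (Pi.single k 1 : Fin n → ℝ)) j = if j ∈ t then 1 else 0 := by
  rw [Finset.sum_apply]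
  have h : ∀ k ∈ t, (Pi.single k 1 : Fin n → ℝ) j = if j = k then 1 else 0 :=
    fun k _ => Pi.single_apply k 1 j
  rw [Finset.sum_congr rfl h, Finset.sum_ite_eq t j (fun _ => (1:ℝ))]

private lemma part2 {n : ℕ} (σ : Equiv.Perm (Fin n)) (s : Fin n → ℤ)
    (hs : ∀ j, s j = 1 ∨ s j = -1) :
    IsLeast (typeBTwistedWeights n
        (fun j : Fin n => (1 : ℝ) / 2 - (s (σ.symm j) : ℝ) * (1 / 2)))
      ((Finset.univ.filter (fun j : Fin n => s j = -1)).card) := by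
  classical
  set G : Finset (Fin n) := univ.filter (fun j : Fin n => s j = -1) with hG
  set v : Fin n → ℝ := fun j : Fin n => (1 : ℝ) / 2 - (s (σ.symm j) : ℝ) * (1 / 2) with hv
  have hveval : ∀ j, v j = if s (σ.symm j) = -1 then 1 else 0 := by
    intro j
    rcases hs (σ.symm j) with h | h <;> rw [hv] <;> simp [h] <;> norm_num
  constructor
  · refine ⟨G.toList.map (fun k => ((Pi.single (σ k) 1 : Fin n → ℝ), 1)), ?_, ?_, ?_⟩
    · intro p hp
      simp only [List.mem_map] at hp
      obtain ⟨k, _, rfl⟩ := hp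
      exact Or.inl ⟨⟨σ k, rfl⟩, rfl⟩
    · rw [List.map_map]
      have : (Prod.fst ∘ fun k => ((Pi.single (σ k) 1 : Fin n → ℝ), 1)) =
          fun k => (Pi.single (σ k) 1 : Fin n → ℝ) := rfl
      rw [this, Finset.sum_map_toList]
      funext j
      have h1 : (∑ k ∈ G, (Pi.single (σ k) 1 : Fin n → ℝ)) =
          ∑ k ∈ G, (fun _ => (1:ℝ)) k • (Pi.single (σ k) 1 : Fin n → ℝ) := by
        simp
      rw [h1, eval_sum_single_comp, hveval]
      simp [hG]
    · rw [List.map_map]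
      have : (Prod.snd ∘ fun k => ((Pi.single (σ k) 1 : Fin n → ℝ), 1)) =
          fun _ => (1:ℕ) := rfl
      rw [this, Finset.sum_map_toList]
      simp
  · intro N hN
    have hle := absSum_le hN
    have habs : ∑ j, |v j| = (G.card : ℝ) := by
      have h1 : ∀ j, |v j| = if s (σ.symm j) = -1 then (1:ℝ) else 0 := by
        intro j; rw [hveval]; split <;> simp
      have h2 : ∑ j, |v j| = ∑ k, (if s k = -1 then (1:ℝ) else 0) := by
        rw [Finset.sum_congr rfl (fun j _ => h1 j)]
        exact (Equiv.sum_comp σ.symm (fun k => if s k = -1 then (1:ℝ) else 0))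
      rw [h2, Finset.sum_ite, Finset.sum_const, Finset.sum_const_zero, hG]
      simp
    rw [habs] at hle
    exact_mod_cast hle

private lemma part1 {n : ℕ} (σ : Equiv.Perm (Fin n)) (s : Fin n → ℤ)
    (hs : ∀ j, s j = 1 ∨ s j = -1) (i : ℕ) :
    IsLeast (typeBTwistedWeights n
        (fun j : Fin n =>
          (if (j : ℕ) < i then (1 : ℝ) else 0) -
            (s (σ.symm j) : ℝ) * (if ((σ.symm j : Fin n) : ℕ) < i then (1 : ℝ) else 0)))
      (2 * (Finset.univ.filter (fun j : Fin n =>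
        (j : ℕ) < i ∧ (s j = -1 ∨ (s j = 1 ∧ i ≤ ((σ j : Fin n) : ℕ))))).card) := by
  classical
  set v : Fin n → ℝ := fun j : Fin n =>
      (if (j : ℕ) < i then (1 : ℝ) else 0) -
        (s (σ.symm j) : ℝ) * (if ((σ.symm j : Fin n) : ℕ) < i then (1 : ℝ) else 0) with hv
  set F : Finset (Fin n) := univ.filter (fun j : Fin n =>
      (j : ℕ) < i ∧ (s j = -1 ∨ (s j = 1 ∧ i ≤ ((σ j : Fin n) : ℕ)))) with hF
  set I : Finset (Fin n) := univ.filter (fun k : Fin n => (k : ℕ) < i) with hI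
  have hImem : ∀ k : Fin n, k ∈ I ↔ (k : ℕ) < i := by intro k; simp [hI]
  set D : Finset (Fin n) := I.filter (fun k => s k = 1 ∧ ((σ k : Fin n) : ℕ) < i) with hD
  set bad : Finset (Fin n) := I.filter (fun k => ¬(s k = 1 ∧ ((σ k : Fin n) : ℕ) < i)) with hbad
  have hFbad : bad = F := by
    ext k
    simp only [hbad, hF, hI, Finset.mem_filter, Finset.mem_univ, true_and, and_assoc]
    rcases hs k with h | h <;> simp [h] <;> omega
  have himg : D.image σ ⊆ I := by
    intro j hj
    simp only [hD, Finset.mem_image, Finset.mem_filter] at hj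
    obtain ⟨k, ⟨_, _, hk⟩, rfl⟩ := hj
    exact (hImem _).2 hk
  set T : Finset (Fin n) := I \ D.image σ with hT
  have hcard : bad.card = T.card := by
    have h1 := Finset.card_filter_add_card_filter_not (s := I)
      (p := fun k => s k = 1 ∧ ((σ k : Fin n) : ℕ) < i)
    rw [hT, Finset.card_sdiff_of_subset himg, Finset.card_image_of_injective _ σ.injective]
    rw [← hD, ← hbad] at h1
    omega
  set e : ↥bad ≃ ↥T := Finset.equivOfCardEq hcard with he
  set τ : Fin n → Fin n := fun k => if h : k ∈ bad then (e ⟨k, h⟩ : Fin n) else σ k with hτ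
  have hτbad : ∀ k (h : k ∈ bad), τ k ∈ T := by
    intro k h
    rw [hτ]; simp only [dif_pos h]
    exact (e ⟨k, h⟩).2
  have hDnotbad : ∀ k ∈ D, k ∉ bad := by
    intro k hk hk'
    rw [hD, Finset.mem_filter] at hk
    rw [hbad, Finset.mem_filter] at hk'
    exact hk'.2 hk.2
  have hτD : ∀ k ∈ D, τ k = σ k := by
    intro k hk; rw [hτ]; exact dif_neg (hDnotbad k hk)
  have hτI : ∀ k ∈ I, τ k ∈ I := by
    intro k hk
    by_cases h : k ∈ bad
    · exact (Finset.sdiff_subset) (hτbad k h)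
    · have hkD : k ∈ D := by
        rw [hbad, Finset.mem_filter, not_and] at h
        rw [hD, Finset.mem_filter]
        exact ⟨hk, not_not.1 (h hk)⟩
      rw [hτD k hkD]
      rw [hD, Finset.mem_filter] at hkD
      exact (hImem _).2 hkD.2.2
  -- the bijection property of τ on I
  have hbij : ∀ f : Fin n → (Fin n → ℝ), ∑ k ∈ I, f (τ k) = ∑ j ∈ I, f j := by
    intro f
    rw [← Finset.sum_filter_add_sum_filter_not I
      (fun k => s k = 1 ∧ ((σ k : Fin n) : ℕ) < i) (fun k => f (τ k)), ← hD, ← hbad]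
    have e1 : ∑ k ∈ D, f (τ k) = ∑ j ∈ D.image σ, f j := by
      rw [Finset.sum_image (fun a _ b _ h => σ.injective h)]
      exact Finset.sum_congr rfl (fun k hk => by rw [hτD k hk])
    have e2 : ∑ k ∈ bad, f (τ k) = ∑ j ∈ T, f j := by
      rw [← Finset.sum_coe_sort bad (fun k => f (τ k)), ← Finset.sum_coe_sort T f]
      rw [← Equiv.sum_comp e (fun x : ↥T => f x)]
      refine Finset.sum_congr rfl (fun x _ => ?_)
      have : τ (↑x) = ↑(e x) := by
        rw [hτ]; simp only [dif_pos x.2]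
      rw [this]
    rw [e1, e2, hT, add_comm]
    exact Finset.sum_sdiff himg
  -- the expression of v as a sum over bad
  have hvsum : v = ∑ k ∈ bad,
      ((Pi.single (τ k) 1 : Fin n → ℝ) - (s k : ℝ) • (Pi.single (σ k) 1 : Fin n → ℝ)) := by
    have hv2 : v = ∑ k ∈ I,
        ((Pi.single (τ k) 1 : Fin n → ℝ) - (s k : ℝ) • (Pi.single (σ k) 1 : Fin n → ℝ)) := by
      rw [Finset.sum_sub_distrib]
      have h1 : ∑ k ∈ I, (Pi.single (τ k) 1 : Fin n → ℝ) = ∑ j ∈ I, (Pi.single j 1 : Fin n → ℝ) :=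
        hbij (fun j => (Pi.single j 1 : Fin n → ℝ))
      rw [h1]
      funext j
      rw [Pi.sub_apply, eval_sum_single_id, eval_sum_single_comp, hv]
      simp only [hImem]
      split_ifs with h1' h2' h2' <;> simp [h1', h2']
    rw [hv2, ← Finset.sum_filter_add_sum_filter_not I
      (fun k => s k = 1 ∧ ((σ k : Fin n) : ℕ) < i) _, ← hD, ← hbad]
    have hzero : ∑ k ∈ D,
        ((Pi.single (τ k) 1 : Fin n → ℝ) - (s k : ℝ) • (Pi.single (σ k) 1 : Fin n → ℝ)) = 0 := by
      refine Finset.sum_eq_zero (fun k hk => ?_)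
      have h1 := hτD k hk
      rw [hD, Finset.mem_filter] at hk
      rw [h1, hk.2.1]
      simp
    rw [hzero, zero_add]
  -- split bad into three pieces
  set t1 : Finset (Fin n) := bad.filter (fun k => s k = 1) with ht1
  set t23 : Finset (Fin n) := bad.filter (fun k => ¬ s k = 1) with ht23
  set t2 : Finset (Fin n) := t23.filter (fun k => τ k = σ k) with ht2
  set t3 : Finset (Fin n) := t23.filter (fun k => ¬ τ k = σ k) with ht3
  have ht23mem : ∀ k ∈ t23, s k = -1 := by
    intro k hk
    rw [ht23, Finset.mem_filter] at hk
    rcases hs k with h | h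
    · exact absurd h hk.2
    · exact h
  have hcards : t1.card + (t2.card + t3.card) = bad.card := by
    have h1 := Finset.card_filter_add_card_filter_not (s := bad) (p := fun k => s k = 1)
    have h2 := Finset.card_filter_add_card_filter_not (s := t23) (p := fun k => τ k = σ k)
    rw [← ht1, ← ht23] at h1
    rw [← ht2, ← ht3] at h2
    omega
  constructor
  · -- membership
    refine ⟨t1.toList.map (fun k =>
        ((Pi.single (τ k) 1 : Fin n → ℝ) - (Pi.single (σ k) 1 : Fin n → ℝ), 2)) ++
      (t2.toList.map (fun k => ((Pi.single (σ k) 1 : Fin n → ℝ), 1)) ++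
      (t2.toList.map (fun k => ((Pi.single (σ k) 1 : Fin n → ℝ), 1)) ++
      t3.toList.map (fun k =>
        ((Pi.single (τ k) 1 : Fin n → ℝ) + (Pi.single (σ k) 1 : Fin n → ℝ), 2)))), ?_, ?_, ?_⟩
    · intro p hp
      simp only [List.mem_append, List.mem_map] at hp
      rcases hp with ⟨k, hk, rfl⟩ | (⟨k, hk, rfl⟩ | (⟨k, hk, rfl⟩ | ⟨k, hk, rfl⟩))
      · -- t1 : long root ε_{τ k} - ε_{σ k}
        rw [Finset.mem_toList, ht1, Finset.mem_filter, hbad, Finset.mem_filter] at hk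
        obtain ⟨⟨hkI, hknot⟩, hks⟩ := hk
        have h1 : (τ k : ℕ) < i := (hImem _).1 (hτI k hkI)
        have h2 : i ≤ ((σ k : Fin n) : ℕ) := by
          by_contra h
          exact hknot ⟨hks, by omega⟩
        refine Or.inr ⟨⟨τ k, σ k, ?_, Or.inl rfl⟩, rfl⟩
        rw [Fin.lt_def]; omega
      · exact Or.inl ⟨⟨σ k, rfl⟩, rfl⟩
      · exact Or.inl ⟨⟨σ k, rfl⟩, rfl⟩
      · -- t3 : long root ε_{τ k} + ε_{σ k}, with τ k ≠ σ k
        rw [Finset.mem_toList, ht3, Finset.mem_filter] at hk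
        rcases lt_trichotomy (τ k) (σ k) with h | h | h
        · exact Or.inr ⟨⟨τ k, σ k, h, Or.inr rfl⟩, rfl⟩
        · exact absurd h hk.2
        · exact Or.inr ⟨⟨σ k, τ k, h, Or.inr (add_comm _ _)⟩, rfl⟩
    · -- sum of first components is v
      simp only [List.map_append, List.map_map, List.sum_append]
      rw [Finset.sum_map_toList, Finset.sum_map_toList, Finset.sum_map_toList]
      simp only [Function.comp]
      rw [hvsum]
      rw [← Finset.sum_filter_add_sum_filter_not bad (fun k => s k = 1) _, ← ht1, ← ht23]
      rw [← Finset.sum_filter_add_sum_filter_not t23 (fun k => τ k = σ k) _, ← ht2, ← ht3]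
      have c1 : ∑ k ∈ t1,
          ((Pi.single (τ k) 1 : Fin n → ℝ) - (s k : ℝ) • (Pi.single (σ k) 1 : Fin n → ℝ)) =
          ∑ k ∈ t1, ((Pi.single (τ k) 1 : Fin n → ℝ) - (Pi.single (σ k) 1 : Fin n → ℝ)) := by
        refine Finset.sum_congr rfl (fun k hk => ?_)
        rw [ht1, Finset.mem_filter] at hk
        rw [hk.2]; norm_num
      have c2 : ∑ k ∈ t2,
          ((Pi.single (τ k) 1 : Fin n → ℝ) - (s k : ℝ) • (Pi.single (σ k) 1 : Fin n → ℝ)) =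
          (∑ k ∈ t2, (Pi.single (σ k) 1 : Fin n → ℝ)) +
          ∑ k ∈ t2, (Pi.single (σ k) 1 : Fin n → ℝ) := by
        rw [← Finset.sum_add_distrib]
        refine Finset.sum_congr rfl (fun k hk => ?_)
        have hk' := hk
        rw [ht2, Finset.mem_filter] at hk'
        have hsk : s k = -1 := ht23mem k hk'.1
        rw [hk'.2, hsk]
        norm_num
      have c3 : ∑ k ∈ t3,
          ((Pi.single (τ k) 1 : Fin n → ℝ) - (s k : ℝ) • (Pi.single (σ k) 1 : Fin n → ℝ)) =
          ∑ k ∈ t3, ((Pi.single (τ k) 1 : Fin n → ℝ) + (Pi.single (σ k) 1 : Fin n → ℝ)) := by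
        refine Finset.sum_congr rfl (fun k hk => ?_)
        rw [ht3, Finset.mem_filter] at hk
        have hsk : s k = -1 := ht23mem k hk.1
        rw [hsk]; norm_num
      rw [c1, c2, c3]
      abel
    · -- sum of weights
      simp only [List.map_append, List.map_map, List.sum_append]
      rw [Finset.sum_map_toList, Finset.sum_map_toList, Finset.sum_map_toList]
      simp only [Function.comp, Finset.sum_const, smul_eq_mul]
      have hbF : bad.card = F.card := by rw [hFbad]
      omega
  · -- lower bound
    intro N hN
    have hle := absSum_le hN
    have habs : ∑ j, |v j| = 2 * (F.card : ℝ) := by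
      have h1 : ∑ j, |v j| = ∑ k, |v (σ k)| := (Equiv.sum_comp σ (fun j => |v j|)).symm
      have h2 : ∀ k : Fin n, v (σ k) =
          (if ((σ k : Fin n) : ℕ) < i then (1:ℝ) else 0) -
            (s k : ℝ) * (if (k : ℕ) < i then (1:ℝ) else 0) := by
        intro k; rw [hv]; simp
      have h3 : ∑ k : Fin n, (if ((σ k : Fin n) : ℕ) < i then (1:ℝ) else 0) =
          ∑ k : Fin n, (if (k : ℕ) < i then (1:ℝ) else 0) :=
        Equiv.sum_comp σ (fun k => if (k : ℕ) < i then (1:ℝ) else 0)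
      have h4 : ∀ k : Fin n, |v (σ k)| - (if ((σ k : Fin n) : ℕ) < i then (1:ℝ) else 0) +
          (if (k : ℕ) < i then (1:ℝ) else 0) =
          if ((k : ℕ) < i ∧ (s k = -1 ∨ (s k = 1 ∧ i ≤ ((σ k : Fin n) : ℕ)))) then 2 else 0 := by
        intro k
        rw [h2 k]
        rcases hs k with h | h <;>
          by_cases hk1 : (k : ℕ) < i <;> by_cases hk2 : ((σ k : Fin n) : ℕ) < i <;>
          first
          | (simp [h, hk1, hk2, not_le.2 hk2] <;> norm_num; done)
          | (simp [h, hk1, hk2, not_lt.1 hk2] <;> norm_num; done)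
          | (simp [h, hk1, hk2] <;> norm_num; done)
          | (simp [h, hk1, hk2, not_le.2 hk2])
          | (simp [h, hk1, hk2, not_lt.1 hk2])
          | (simp [h, hk1, hk2])
      calc ∑ j, |v j| = ∑ k, |v (σ k)| := h1
        _ = ∑ k : Fin n, (|v (σ k)| - (if ((σ k : Fin n) : ℕ) < i then (1:ℝ) else 0) +
            (if (k : ℕ) < i then (1:ℝ) else 0)) := by
          rw [Finset.sum_add_distrib, Finset.sum_sub_distrib, h3]; ring
        _ = ∑ k : Fin n, (if ((k : ℕ) < i ∧
            (s k = -1 ∨ (s k = 1 ∧ i ≤ ((σ k : Fin n) : ℕ)))) then (2:ℝ) else 0) :=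
          Finset.sum_congr rfl (fun k _ => h4 k)
        _ = 2 * (F.card : ℝ) := by
          rw [Finset.sum_ite, Finset.sum_const, Finset.sum_const_zero, hF]
          simp [mul_comm]
    rw [habs] at hle
    exact_mod_cast hle

/-- Twisted Kostant degrees of the fundamental weights in type `B_n`.  A signed
permutation `w` is encoded by a permutation `σ` of the (0-based) index set and
signs `s i ∈ {±1}`, acting by `w(ε_i) = s(i) • ε_{σ(i)}`, so that
`(λ - w(λ))_j = λ_j - s(σ⁻¹ j) * λ_{σ⁻¹ j}`.  In 1-based terms, `w(j) > i` means
`s j = 1` together with `σ(j) > i`, and `w(j) < 0` means `s j = -1`.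
For `1 ≤ i ≤ n-1`, with `ω_i = ε₁ + ⋯ + ε_i`:
`n^ν(ω_i, w) = 2·#{j ≤ i : w(j) > i or w(j) < 0}`; and for
`ω_n = (ε₁ + ⋯ + ε_n)/2`: `n^ν(ω_n, w) = #{j : w(j) < 0}`. -/
theorem twisted_kostant_fundamental_typeB (n : ℕ) (hn : 2 ≤ n)
    (σ : Equiv.Perm (Fin n)) (s : Fin n → ℤ) (hs : ∀ j, s j = 1 ∨ s j = -1) :
    (∀ i : ℕ, 1 ≤ i → i ≤ n - 1 →
      IsLeast (typeBTwistedWeights n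
          (fun j : Fin n =>
            (if (j : ℕ) < i then (1 : ℝ) else 0) -
              (s (σ.symm j) : ℝ) * (if ((σ.symm j : Fin n) : ℕ) < i then (1 : ℝ) else 0)))
        (2 * (Finset.univ.filter (fun j : Fin n =>
          (j : ℕ) < i ∧ (s j = -1 ∨ (s j = 1 ∧ i ≤ ((σ j : Fin n) : ℕ))))).card)) ∧
    IsLeast (typeBTwistedWeights n
        (fun j : Fin n => (1 : ℝ) / 2 - (s (σ.symm j) : ℝ) * (1 / 2)))
      ((Finset.univ.filter (fun j : Fin n => s j = -1)).card) := by
  exact ⟨fun i _ _ => part1 σ s hs i, part2 σ s hs⟩
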